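/- Let O be the order of conductor f = l^λ in an imaginary quadratic field K, where l is a prime and λ > 0. Let 𝔞 be a proper O-ideal, and let m be an arbitrary positive integer written as m = n·l^h, where n is a positive integer relatively prime to l and h ≥ 0. Then N(𝔞) = m if and only if there exist proper O-ideals 𝔟 and 𝔠 with N(𝔟) = n and N(𝔠) = l^h such that 𝔞 = 𝔟𝔠. -/

import Mathlib

open NumberField

/-- An order in the field `K`: a subring that is free of rank `2` as a `ℤ`-module. -/
def IsQuadraticOrder (K : Type*) [Field K] (O : Subring K) : Prop :=
  Module.Free ℤ O ∧ Module.finrank ℤ O = 2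

/-- The conductor of an order `O` in `K`: the index `[𝒪_K : O]` of `O` in the
ring of integers (the integral closure of `ℤ` in `K`). -/
noncomputable def orderConductor (K : Type*) [Field K] (O : Subring K) : ℕ :=
  AddSubgroup.relIndex O.toAddSubgroup (integralClosure ℤ K).toSubring.toAddSubgroup

/-- A proper ideal of an order `O` in `K`: a nonzero ideal whose multiplier ring
`{β ∈ K : β𝔞 ⊆ 𝔞}` is exactly `O`. -/
def IsProperIdeal {K : Type*} [Field K] (O : Subring K) (𝔞 : Ideal O) : Prop :=
  𝔞 ≠ ⊥ ∧ ∀ β : K, (∀ a ∈ 𝔞, ∃ c ∈ 𝔞, β * (a : K) = (c : K)) ↔ β ∈ O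

lemma card_cast_mem {R : Type*} [CommRing R] (I : Ideal R) :
    ((Nat.card (R ⧸ I) : ℕ) : R) ∈ I := by
  have : ((Nat.card (R ⧸ I) : ℕ) : R ⧸ I) = 0 := by
    rw [← nsmul_one]; exact card_nsmul_eq_zero'
  rwa [← map_natCast (Ideal.Quotient.mk I), Ideal.Quotient.eq_zero_iff_mem] at this

lemma prime_dvd_of_annihilates {G : Type*} [AddGroup G] [Finite G] {N p : ℕ}
    (hN : ∀ x : G, N • x = 0) (hp : p.Prime) (hdvd : p ∣ Nat.card G) : p ∣ N := by
  haveI := Fintype.ofFinite G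
  rw [Nat.card_eq_fintype_card] at hdvd
  haveI : Fact p.Prime := ⟨hp⟩
  obtain ⟨g, hg⟩ := exists_prime_addOrderOf_dvd_card p hdvd
  have := addOrderOf_dvd_of_nsmul_eq_zero (hN g)
  rwa [hg] at this

lemma nsmul_quot_eq_zero {R : Type*} [CommRing R] (I : Ideal R) {N : ℕ}
    (hN : ((N : ℕ) : R) ∈ I) (x : R ⧸ I) : N • x = 0 := by
  obtain ⟨y, rfl⟩ := Ideal.Quotient.mk_surjective x
  rw [← map_nsmul, Ideal.Quotient.eq_zero_iff_mem, nsmul_eq_mul]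
  exact I.mul_mem_right y hN

lemma sup_eq_top_of_coprime_mem {R : Type*} [CommRing R] {I J : Ideal R} {a b : ℕ}
    (hab : Nat.Coprime a b) (ha : ((a : ℕ) : R) ∈ I) (hb : ((b : ℕ) : R) ∈ J) :
    I ⊔ J = ⊤ := by
  rw [Ideal.eq_top_iff_one]
  have hco : IsCoprime ((a : ℤ)) ((b : ℤ)) := by
    rw [Int.isCoprime_iff_gcd_eq_one, Int.gcd_natCast_natCast]; exact hab
  obtain ⟨u, v, huv⟩ := hco.map (Int.castRingHom R)
  simp only [eq_intCast, Int.cast_natCast] at huv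
  rw [← huv]
  exact Submodule.add_mem_sup (I.mul_mem_left u ha) (J.mul_mem_left v hb)

lemma card_quot_mul {R : Type*} [CommRing R] (I J : Ideal R) (h : I ⊔ J = ⊤) :
    Nat.card (R ⧸ I * J) = Nat.card (R ⧸ I) * Nat.card (R ⧸ J) := by
  rw [Nat.card_congr (Ideal.quotientMulEquivQuotientProd I J
    (Ideal.isCoprime_iff_sup_eq.mpr h)).toEquiv, Nat.card_prod]

lemma isProper_of_factor {K : Type*} [Field K] {O : Subring K} {𝔞 𝔟 𝔠 : Ideal O}
    (h𝔞 : IsProperIdeal O 𝔞) (hmul : 𝔟 * 𝔠 = 𝔞) (hbot : 𝔟 ≠ ⊥) : IsProperIdeal O 𝔟 := by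
  refine ⟨hbot, fun β => ⟨fun H => ?_, fun hβ a ha => ?_⟩⟩
  · refine (h𝔞.2 β).mp (fun a ha => ?_)
    rw [← hmul] at ha
    refine Submodule.mul_induction_on ha (fun b hb c hc => ?_) (fun x y hx hy => ?_)
    · obtain ⟨b', hb', hbb'⟩ := H b hb
      refine ⟨b' * c, by rw [← hmul]; exact Ideal.mul_mem_mul hb' hc, ?_⟩
      push_cast
      rw [← mul_assoc, hbb']
    · obtain ⟨cx, hcx, hx'⟩ := hx
      obtain ⟨cy, hcy, hy'⟩ := hy
      refine ⟨cx + cy, add_mem hcx hcy, ?_⟩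
      push_cast
      rw [mul_add, hx', hy']
  · exact ⟨⟨β, hβ⟩ * a, 𝔟.mul_mem_left _ ha, rfl⟩

theorem norm_splitting_prime_power_conductor
    (K : Type*) [Field K] [NumberField K]
    (hdeg : Module.finrank ℚ K = 2) (himag : IsEmpty (K →+* ℝ))
    (O : Subring K) (hO : IsQuadraticOrder K O)
    (l : ℕ) (hl : l.Prime) (lam : ℕ) (hlam : 0 < lam)
    (hf : orderConductor K O = l ^ lam)
    (𝔞 : Ideal O) (h𝔞 : IsProperIdeal O 𝔞)
    (m n h : ℕ) (hn : 0 < n) (hnl : Nat.Coprime n l)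
    (hmfact : m = n * l ^ h) :
    Nat.card (↥O ⧸ 𝔞) = m ↔
      ∃ 𝔟 𝔠 : Ideal O,
        IsProperIdeal O 𝔟 ∧ IsProperIdeal O 𝔠 ∧
        Nat.card (↥O ⧸ 𝔟) = n ∧ Nat.card (↥O ⧸ 𝔠) = l ^ h ∧
        𝔞 = 𝔟 * 𝔠 := by
  have hnlh : Nat.Coprime n (l ^ h) := hnl.pow_right h
  have hlpos := hl.pos
  constructor
  · -- forward
    intro hcard
    have hm0 : m ≠ 0 := by rw [hmfact]; positivity
    haveI : Finite (↥O ⧸ 𝔞) := Nat.finite_of_card_ne_zero (hcard ▸ hm0)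
    set 𝔟 : Ideal ↥O := 𝔞 ⊔ Ideal.span {((n : ℕ) : ↥O)} with h𝔟
    set 𝔠 : Ideal ↥O := 𝔞 ⊔ Ideal.span {((l ^ h : ℕ) : ↥O)} with h𝔠
    have hnmem : ((n : ℕ) : ↥O) ∈ 𝔟 :=
      le_sup_right (α := Ideal ↥O) (Ideal.subset_span rfl)
    have hlmem : ((l ^ h : ℕ) : ↥O) ∈ 𝔠 :=
      le_sup_right (α := Ideal ↥O) (Ideal.subset_span rfl)
    have hsup : 𝔟 ⊔ 𝔠 = ⊤ := sup_eq_top_of_coprime_mem hnlh hnmem hlmem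
    have hmmem : ((m : ℕ) : ↥O) ∈ 𝔞 := hcard ▸ card_cast_mem 𝔞
    have hmul : 𝔟 * 𝔠 = 𝔞 := by
      apply le_antisymm
      · rw [h𝔟, h𝔠, Ideal.sup_mul, Ideal.mul_sup, Ideal.mul_sup]
        refine sup_le (sup_le Ideal.mul_le_right Ideal.mul_le_left)
          (sup_le Ideal.mul_le_right ?_)
        rw [Ideal.span_singleton_mul_span_singleton, Ideal.span_singleton_le_iff_mem]
        have : ((n : ℕ) : ↥O) * ((l ^ h : ℕ) : ↥O) = ((m : ℕ) : ↥O) := by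
          rw [hmfact]; push_cast; ring
        rw [this]; exact hmmem
      · rw [Ideal.mul_eq_inf_of_coprime hsup]
        exact le_inf le_sup_left le_sup_left
    have hcards : Nat.card (↥O ⧸ 𝔟) * Nat.card (↥O ⧸ 𝔠) = n * l ^ h := by
      rw [← card_quot_mul 𝔟 𝔠 hsup, hmul, hcard, hmfact]
    have hb0 : Nat.card (↥O ⧸ 𝔟) ≠ 0 := by
      intro h0; rw [h0, zero_mul] at hcards
      exact (by positivity : n * l ^ h ≠ 0) hcards.symm
    have hc0 : Nat.card (↥O ⧸ 𝔠) ≠ 0 := by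
      intro h0; rw [h0, mul_zero] at hcards
      exact (by positivity : n * l ^ h ≠ 0) hcards.symm
    haveI : Finite (↥O ⧸ 𝔟) := Nat.finite_of_card_ne_zero hb0
    haveI : Finite (↥O ⧸ 𝔠) := Nat.finite_of_card_ne_zero hc0
    have hbann : ∀ x : ↥O ⧸ 𝔟, n • x = 0 := nsmul_quot_eq_zero 𝔟 hnmem
    have hcann : ∀ x : ↥O ⧸ 𝔠, (l ^ h) • x = 0 := nsmul_quot_eq_zero 𝔠 hlmem
    have hldn : ¬ l ∣ n := fun hd => hl.one_lt.ne' (hnl.symm.eq_one_of_dvd hd)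
    have hbl : ¬ l ∣ Nat.card (↥O ⧸ 𝔟) := fun hd =>
      hldn (prime_dvd_of_annihilates hbann hl hd)
    have hcopb : Nat.Coprime (Nat.card (↥O ⧸ 𝔟)) (l ^ h) :=
      (((hl.coprime_iff_not_dvd).mpr hbl).symm).pow_right h
    have hdvd1 : Nat.card (↥O ⧸ 𝔟) ∣ n :=
      hcopb.dvd_of_dvd_mul_right ⟨Nat.card (↥O ⧸ 𝔠), hcards.symm⟩
    have hcopn : Nat.Coprime n (Nat.card (↥O ⧸ 𝔠)) := by
      by_contra hco
      obtain ⟨p, hp, hpd⟩ := Nat.exists_prime_and_dvd hco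
      have hpn : p ∣ n := hpd.trans (Nat.gcd_dvd_left _ _)
      have hpc : p ∣ Nat.card (↥O ⧸ 𝔠) := hpd.trans (Nat.gcd_dvd_right _ _)
      have hpl : p ∣ l ^ h := prime_dvd_of_annihilates hcann hp hpc
      have : p = l := (Nat.prime_dvd_prime_iff_eq hp hl).mp (hp.dvd_of_dvd_pow hpl)
      exact hldn (this ▸ hpn)
    have hdvd2 : n ∣ Nat.card (↥O ⧸ 𝔟) :=
      hcopn.dvd_of_dvd_mul_right (hcards ▸ Dvd.intro _ rfl)
    have hbeq : Nat.card (↥O ⧸ 𝔟) = n := Nat.dvd_antisymm hdvd1 hdvd2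
    have hceq : Nat.card (↥O ⧸ 𝔠) = l ^ h := by
      rw [hbeq] at hcards
      exact Nat.eq_of_mul_eq_mul_left hn hcards
    have hbbot : 𝔟 ≠ ⊥ := fun hb => h𝔞.1 (le_bot_iff.mp (hb ▸ le_sup_left (a := 𝔞)))
    have hcbot : 𝔠 ≠ ⊥ := fun hc => h𝔞.1 (le_bot_iff.mp (hc ▸ le_sup_left (a := 𝔞)))
    exact ⟨𝔟, 𝔠, isProper_of_factor h𝔞 hmul hbbot,
      isProper_of_factor h𝔞 (by rw [mul_comm]; exact hmul) hcbot, hbeq, hceq, hmul.symm⟩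
  · -- backward
    rintro ⟨𝔟, 𝔠, hb, hc, hcb, hcc, rfl⟩
    have hnmem : ((n : ℕ) : ↥O) ∈ 𝔟 := hcb ▸ card_cast_mem 𝔟
    have hlmem : ((l ^ h : ℕ) : ↥O) ∈ 𝔠 := hcc ▸ card_cast_mem 𝔠
    rw [card_quot_mul 𝔟 𝔠 (sup_eq_top_of_coprime_mem hnlh hnmem hlmem), hcb, hcc, hmfact]
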